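/- Suppose X > 0 solves the DARE and X − H_k = (Sᵀ)^{2^k}(X + X G_k X) S^{2^k} with 0 ≤ G_k ≤ Y for all k. Then ‖H_k − X‖ ≤ ‖X‖(1 + ‖X‖·‖Y‖)·‖S^{2^k}‖², and hence if ρ(S) < 1 then H_k converges to X with limsup_{k→∞} ‖H_k − X‖^{1/2^k} ≤ ρ(S)². -/

import Mathlib

open Matrix Filter

open scoped Matrix.Norms.L2Operator Topology

private lemma sda_opnorm_le_bound {N : ℕ} (A : Matrix (Fin N) (Fin N) ℝ) {c : ℝ} (hc : 0 ≤ c)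
    (h : ∀ x : EuclideanSpace ℝ (Fin N),
      ‖(EuclideanSpace.equiv (Fin N) ℝ).symm (A *ᵥ x)‖ ≤ c * ‖x‖) : ‖A‖ ≤ c := by
  rw [Matrix.l2_opNorm_def]
  exact ContinuousLinearMap.opNorm_le_bound _ hc h

private lemma sda_dot_eq_inner {N : ℕ} (v : Fin N → ℝ) (w : Fin N → ℝ) :
    v ⬝ᵥ w = inner ℝ ((EuclideanSpace.equiv (Fin N) ℝ).symm v)
      ((EuclideanSpace.equiv (Fin N) ℝ).symm w) := by
  simp [dotProduct, PiLp.inner_apply, RCLike.inner_apply, mul_comm]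

private lemma sda_norm_symm_sq {N : ℕ} (v : Fin N → ℝ) :
    ‖(EuclideanSpace.equiv (Fin N) ℝ).symm v‖ ^ 2 = v ⬝ᵥ v := by
  rw [sda_dot_eq_inner, real_inner_self_eq_norm_sq]

open scoped MatrixOrder in
private lemma sda_psd_norm_le {N : ℕ} {G Y : Matrix (Fin N) (Fin N) ℝ}
    (hG : G.PosSemidef) (hGY : (Y - G).PosSemidef) : ‖G‖ ≤ ‖Y‖ := by
  have hY0 : (0:ℝ) ≤ ‖Y‖ := norm_nonneg _
  set B := CFC.sqrt G with hBdef
  have hB : B.PosSemidef := (CFC.sqrt_nonneg G).posSemidef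
  have hBB : B * B = G := CFC.sqrt_mul_sqrt_self G hG.nonneg
  have hBt : Bᵀ = B := by
    have := hB.1
    rwa [Matrix.IsHermitian, conjTranspose_eq_transpose_of_trivial] at this
  have key : ∀ x : EuclideanSpace ℝ (Fin N),
      ‖(EuclideanSpace.equiv (Fin N) ℝ).symm (B *ᵥ x)‖ ≤ Real.sqrt ‖Y‖ * ‖x‖ := by
    intro x
    have h1 : (B *ᵥ x) ⬝ᵥ (B *ᵥ x) = (x : Fin N → ℝ) ⬝ᵥ (G *ᵥ x) := by
      rw [← hBB, ← mulVec_mulVec, dotProduct_mulVec (x : Fin N → ℝ) B (B *ᵥ x),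
        ← mulVec_transpose, hBt]
    have h2 : (x : Fin N → ℝ) ⬝ᵥ (G *ᵥ x) ≤ (x : Fin N → ℝ) ⬝ᵥ (Y *ᵥ x) := by
      have := hGY.dotProduct_mulVec_nonneg (x : Fin N → ℝ)
      simp only [star_trivial] at this
      rw [sub_mulVec, dotProduct_sub] at this
      linarith
    have h3 : (x : Fin N → ℝ) ⬝ᵥ (Y *ᵥ x) ≤ ‖Y‖ * ‖x‖ ^ 2 := by
      rw [sda_dot_eq_inner]
      calc inner ℝ ((EuclideanSpace.equiv (Fin N) ℝ).symm (x : Fin N → ℝ))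
            ((EuclideanSpace.equiv (Fin N) ℝ).symm (Y *ᵥ x))
          ≤ ‖(EuclideanSpace.equiv (Fin N) ℝ).symm (x : Fin N → ℝ)‖ *
            ‖(EuclideanSpace.equiv (Fin N) ℝ).symm (Y *ᵥ x)‖ := real_inner_le_norm _ _
        _ ≤ ‖x‖ * (‖Y‖ * ‖x‖) := by
            have := Y.l2_opNorm_mulVec x
            have hx : ((EuclideanSpace.equiv (Fin N) ℝ).symm (x : Fin N → ℝ)) = x := rfl
            rw [hx]
            exact mul_le_mul_of_nonneg_left this (norm_nonneg _)
        _ = ‖Y‖ * ‖x‖ ^ 2 := by ring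
    have hsq : ‖(EuclideanSpace.equiv (Fin N) ℝ).symm (B *ᵥ x)‖ ^ 2 ≤ ‖Y‖ * ‖x‖ ^ 2 := by
      rw [sda_norm_symm_sq]; linarith
    calc ‖(EuclideanSpace.equiv (Fin N) ℝ).symm (B *ᵥ x)‖
        = Real.sqrt (‖(EuclideanSpace.equiv (Fin N) ℝ).symm (B *ᵥ x)‖ ^ 2) := by
          rw [Real.sqrt_sq (norm_nonneg _)]
      _ ≤ Real.sqrt (‖Y‖ * ‖x‖ ^ 2) := Real.sqrt_le_sqrt hsq
      _ = Real.sqrt ‖Y‖ * ‖x‖ := by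
          rw [Real.sqrt_mul hY0, Real.sqrt_sq (norm_nonneg _)]
  have hBn : ‖B‖ ≤ Real.sqrt ‖Y‖ := sda_opnorm_le_bound _ (Real.sqrt_nonneg _) key
  have hGn : ‖G‖ = ‖B‖ * ‖B‖ := by
    rw [← hBB]
    calc ‖B * B‖ = ‖Bᴴ * B‖ := by
          rw [conjTranspose_eq_transpose_of_trivial, hBt]
      _ = ‖B‖ * ‖B‖ := B.l2_opNorm_conjTranspose_mul_self
  rw [hGn]
  calc ‖B‖ * ‖B‖ ≤ Real.sqrt ‖Y‖ * Real.sqrt ‖Y‖ :=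
        mul_le_mul hBn hBn (norm_nonneg _) (Real.sqrt_nonneg _)
    _ = ‖Y‖ := Real.mul_self_sqrt hY0

private lemma sda_norm_le_norm_map {N : ℕ} (B : Matrix (Fin N) (Fin N) ℝ) :
    ‖B‖ ≤ ‖B.map Complex.ofReal‖ := by
  apply sda_opnorm_le_bound _ (norm_nonneg _)
  intro x
  set xc : EuclideanSpace ℂ (Fin N) :=
    (EuclideanSpace.equiv (Fin N) ℂ).symm (fun i => ((x i : ℝ) : ℂ)) with hxc
  have hmv : (B.map Complex.ofReal) *ᵥ (xc : Fin N → ℂ) = fun i => ((B *ᵥ x) i : ℂ) := by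
    funext i
    exact (RingHom.map_mulVec Complex.ofRealHom B x i).symm
  have hnx : ‖xc‖ = ‖x‖ := by
    rw [EuclideanSpace.norm_eq, EuclideanSpace.norm_eq]
    congr 1
    refine Finset.sum_congr rfl fun i _ => ?_
    simp [hxc]
  have h2 := (B.map Complex.ofReal).l2_opNorm_mulVec xc
  rw [hmv, hnx] at h2
  refine le_trans (le_of_eq ?_) h2
  rw [EuclideanSpace.norm_eq, EuclideanSpace.norm_eq]
  congr 1
  refine Finset.sum_congr rfl fun i _ => ?_
  simp

/-- `‖H_k − X‖ ≤ ‖X‖(1 + ‖X‖‖Y‖)‖S^(2^k)‖²`; if moreover `ρ(S) < 1` then `H_k → X`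
with `limsup ‖H_k − X‖^(1/2^k) ≤ ρ(S)²`. -/
theorem sda_Hk_convergence {N : ℕ}
    (H_ G_ : ℕ → Matrix (Fin N) (Fin N) ℝ)
    (A G H X Y S : Matrix (Fin N) (Fin N) ℝ)
    (hX : X.PosDef)
    (hS : S = (1 + G * X)⁻¹ * A)
    (hDARE : X = Aᵀ * X * (1 + G * X)⁻¹ * A + H)
    (hid : ∀ k, X - H_ k = (Sᵀ) ^ (2 ^ k) * (X + X * G_ k * X) * S ^ (2 ^ k))
    (hGk0 : ∀ k, (G_ k).PosSemidef)
    (hGkY : ∀ k, (Y - G_ k).PosSemidef) :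
    (∀ k, ‖H_ k - X‖ ≤ ‖X‖ * (1 + ‖X‖ * ‖Y‖) * ‖S ^ (2 ^ k)‖ ^ 2) ∧
      (spectralRadius ℂ (S.map Complex.ofReal) < 1 →
        Tendsto H_ atTop (𝓝 X) ∧
          limsup (fun k => ‖H_ k - X‖ ^ ((1 : ℝ) / 2 ^ k)) atTop ≤
            (spectralRadius ℂ (S.map Complex.ofReal)).toReal ^ 2) := by
  have key : ∀ k, ‖H_ k - X‖ ≤ ‖X‖ * (1 + ‖X‖ * ‖Y‖) * ‖S ^ (2 ^ k)‖ ^ 2 := by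
    intro k
    rw [norm_sub_rev, hid k]
    have hGkn : ‖G_ k‖ ≤ ‖Y‖ := sda_psd_norm_le (hGk0 k) (hGkY k)
    have hT : ‖(Sᵀ) ^ (2 ^ k)‖ = ‖S ^ (2 ^ k)‖ := by
      rw [← transpose_pow, ← conjTranspose_eq_transpose_of_trivial,
        Matrix.l2_opNorm_conjTranspose]
    have hmid : ‖X + X * G_ k * X‖ ≤ ‖X‖ * (1 + ‖X‖ * ‖Y‖) := by
      have h1 : ‖X * G_ k * X‖ ≤ ‖X * G_ k‖ * ‖X‖ := Matrix.l2_opNorm_mul _ _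
      have h2 : ‖X * G_ k‖ ≤ ‖X‖ * ‖G_ k‖ := Matrix.l2_opNorm_mul _ _
      have h3 : ‖X + X * G_ k * X‖ ≤ ‖X‖ + ‖X * G_ k * X‖ := norm_add_le _ _
      have h4 : ‖X * G_ k‖ * ‖X‖ ≤ ‖X‖ * ‖G_ k‖ * ‖X‖ :=
        mul_le_mul_of_nonneg_right h2 (norm_nonneg X)
      have h5 : ‖X‖ * ‖G_ k‖ * ‖X‖ ≤ ‖X‖ * ‖Y‖ * ‖X‖ :=
        mul_le_mul_of_nonneg_right
          (mul_le_mul_of_nonneg_left hGkn (norm_nonneg X)) (norm_nonneg X)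
      have h6 : ‖X‖ + ‖X‖ * ‖Y‖ * ‖X‖ = ‖X‖ * (1 + ‖X‖ * ‖Y‖) := by ring
      linarith
    calc ‖Sᵀ ^ (2 ^ k) * (X + X * G_ k * X) * S ^ (2 ^ k)‖
        ≤ ‖Sᵀ ^ (2 ^ k) * (X + X * G_ k * X)‖ * ‖S ^ (2 ^ k)‖ := Matrix.l2_opNorm_mul _ _
      _ ≤ ‖Sᵀ ^ (2 ^ k)‖ * ‖X + X * G_ k * X‖ * ‖S ^ (2 ^ k)‖ :=
          mul_le_mul_of_nonneg_right (Matrix.l2_opNorm_mul _ _) (norm_nonneg _)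
      _ = ‖S ^ (2 ^ k)‖ * ‖X + X * G_ k * X‖ * ‖S ^ (2 ^ k)‖ := by rw [hT]
      _ ≤ ‖S ^ (2 ^ k)‖ * (‖X‖ * (1 + ‖X‖ * ‖Y‖)) * ‖S ^ (2 ^ k)‖ := by
          gcongr
      _ = ‖X‖ * (1 + ‖X‖ * ‖Y‖) * ‖S ^ (2 ^ k)‖ ^ 2 := by ring
  refine ⟨key, fun hρ => ?_⟩
  set T := S.map Complex.ofReal with hTdef
  set ρ := spectralRadius ℂ T with hρdef
  have hρtop : ρ ≠ ⊤ := hρ.ne_top ∘ fun h => by simp [h] at hρ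
  -- powers commute with the complexification
  have hpow : ∀ m : ℕ, T ^ m = (S ^ m).map Complex.ofReal := by
    intro m
    have := map_pow (Complex.ofRealHom.mapMatrix :
      Matrix (Fin N) (Fin N) ℝ →+* Matrix (Fin N) (Fin N) ℂ) S m
    exact this.symm
  have hST : ∀ m : ℕ, ‖S ^ m‖ ≤ ‖T ^ m‖ := by
    intro m
    rw [hpow m]
    exact sda_norm_le_norm_map _
  -- Gelfand's formula along the subsequence 2^k
  have hgel := spectrum.pow_nnnorm_pow_one_div_tendsto_nhds_spectralRadius T
  have hsub : Tendsto (fun k : ℕ => 2 ^ k) atTop atTop :=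
    tendsto_pow_atTop_atTop_of_one_lt one_lt_two
  have hgel2 : Tendsto (fun k : ℕ => (‖T ^ 2 ^ k‖₊ : ENNReal) ^ (1 / (2 ^ k : ℕ) : ℝ))
      atTop (𝓝 ρ) := hgel.comp hsub
  have hb : Tendsto (fun k : ℕ => ‖T ^ 2 ^ k‖ ^ ((1 : ℝ) / 2 ^ k)) atTop (𝓝 ρ.toReal) := by
    have h := (ENNReal.tendsto_toReal hρtop).comp hgel2
    refine Tendsto.congr (fun k => ?_) h
    rw [Function.comp_apply, ← ENNReal.toReal_rpow]
    push_cast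
    simp
  set r0 := ρ.toReal with hr0def
  have hr00 : 0 ≤ r0 := ENNReal.toReal_nonneg
  have hr01 : r0 < 1 := by
    have := (ENNReal.toReal_lt_toReal hρtop (by norm_num)).mpr hρ
    simpa using this
  set C := ‖X‖ * (1 + ‖X‖ * ‖Y‖) with hCdef
  have hC0 : 0 ≤ C := by positivity
  -- the eventual geometric bound
  set r : ℝ := (1 + r0) / 2 with hrdef
  have hr0 : 0 < r := by linarith
  have hrlt1 : r < 1 := by linarith
  have hr0r : r0 < r := by linarith
  have hev : ∀ᶠ k in atTop, ‖T ^ 2 ^ k‖ ≤ r ^ 2 ^ k := by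
    filter_upwards [hb.eventually_le_const hr0r] with k hk
    have hn0 : ((2 : ℝ) ^ k) ≠ 0 := by positivity
    have hbk0 : 0 ≤ ‖T ^ 2 ^ k‖ ^ ((1 : ℝ) / 2 ^ k) := Real.rpow_nonneg (norm_nonneg _) _
    have := pow_le_pow_left₀ hbk0 hk (2 ^ k)
    calc ‖T ^ 2 ^ k‖ = (‖T ^ 2 ^ k‖ ^ ((1 : ℝ) / 2 ^ k)) ^ (2 ^ k : ℕ) := by
          rw [← Real.rpow_natCast (‖T ^ 2 ^ k‖ ^ ((1 : ℝ) / 2 ^ k)) (2 ^ k),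
            ← Real.rpow_mul (norm_nonneg _)]
          push_cast
          rw [one_div, inv_mul_cancel₀ hn0, Real.rpow_one]
      _ ≤ r ^ 2 ^ k := this
  have hHb : ∀ᶠ k in atTop, ‖H_ k - X‖ ≤ (C + 1) * (r ^ 2 ^ k) ^ 2 := by
    filter_upwards [hev] with k hk
    have h1 := key k
    have h2 : ‖S ^ 2 ^ k‖ ≤ r ^ 2 ^ k := le_trans (hST _) hk
    have h3 : ‖S ^ 2 ^ k‖ ^ 2 ≤ (r ^ 2 ^ k) ^ 2 := by
      have := norm_nonneg (S ^ 2 ^ k)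
      nlinarith
    nlinarith [sq_nonneg (r ^ 2 ^ k), norm_nonneg (S ^ 2 ^ k)]
  -- convergence of H_
  have htendsto : Tendsto H_ atTop (𝓝 X) := by
    rw [tendsto_iff_norm_sub_tendsto_zero]
    apply squeeze_zero' (Eventually.of_forall fun k => norm_nonneg _) hHb
    have : Tendsto (fun k : ℕ => r ^ k) atTop (𝓝 0) :=
      tendsto_pow_atTop_nhds_zero_of_lt_one hr0.le hrlt1
    have h4 : Tendsto (fun k : ℕ => r ^ 2 ^ k) atTop (𝓝 0) := this.comp hsub
    have h5 : Tendsto (fun k : ℕ => (C + 1) * (r ^ 2 ^ k) ^ 2) atTop (𝓝 ((C + 1) * 0 ^ 2)) :=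
      (tendsto_const_nhds.mul ((h4.pow 2)))
    simpa using h5
  refine ⟨htendsto, ?_⟩
  -- the limsup bound
  set g : ℕ → ℝ := fun k => (C + 1) ^ ((1 : ℝ) / 2 ^ k) * (‖T ^ 2 ^ k‖ ^ ((1 : ℝ) / 2 ^ k)) ^ 2
    with hgdef
  have hC1 : (0 : ℝ) < C + 1 := by linarith
  have hexp : Tendsto (fun k : ℕ => (1 : ℝ) / 2 ^ k) atTop (𝓝 0) := by
    have := tendsto_pow_atTop_nhds_zero_of_lt_one
      (by norm_num : (0:ℝ) ≤ 1 / 2) (by norm_num : (1:ℝ) / 2 < 1)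
    simpa [div_pow] using this
  have hgtendsto : Tendsto g atTop (𝓝 (r0 ^ 2)) := by
    have h1 : Tendsto (fun k : ℕ => (C + 1) ^ ((1 : ℝ) / 2 ^ k)) atTop (𝓝 1) := by
      have hc : ContinuousAt (fun y : ℝ => (C + 1) ^ y) 0 :=
        Real.continuousAt_const_rpow hC1.ne'
      have := hc.tendsto.comp hexp
      simpa [Function.comp_def] using this
    have h2 : Tendsto (fun k : ℕ => (‖T ^ 2 ^ k‖ ^ ((1 : ℝ) / 2 ^ k)) ^ 2) atTop
        (𝓝 (r0 ^ 2)) := hb.pow 2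
    have h3 := h1.mul h2
    rw [one_mul] at h3
    exact h3
  have hfg : ∀ k, ‖H_ k - X‖ ^ ((1 : ℝ) / 2 ^ k) ≤ g k := by
    intro k
    have h1 := key k
    have hTS := hST (2 ^ k)
    have h2 : ‖S ^ 2 ^ k‖ ^ 2 ≤ ‖T ^ 2 ^ k‖ ^ 2 := by
      nlinarith [norm_nonneg (S ^ 2 ^ k)]
    have h3 : ‖H_ k - X‖ ≤ (C + 1) * ‖T ^ 2 ^ k‖ ^ 2 := by
      nlinarith [sq_nonneg ‖T ^ 2 ^ k‖]
    have h4 := Real.rpow_le_rpow (norm_nonneg _) h3 (by positivity : (0:ℝ) ≤ (1:ℝ) / 2 ^ k)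
    refine h4.trans (le_of_eq ?_)
    rw [Real.mul_rpow (by linarith) (sq_nonneg _)]
    congr 1
    rw [← Real.rpow_natCast ‖T ^ 2 ^ k‖ 2, ← Real.rpow_mul (norm_nonneg _), mul_comm,
      Real.rpow_mul (norm_nonneg _), Real.rpow_natCast]
  have hcob : IsCoboundedUnder (· ≤ ·) atTop (fun k => ‖H_ k - X‖ ^ ((1 : ℝ) / 2 ^ k)) := by
    refine IsBoundedUnder.isCoboundedUnder_le (isBoundedUnder_of ⟨0, fun k => ?_⟩)
    exact Real.rpow_nonneg (norm_nonneg _) _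
  have hbdd : IsBoundedUnder (· ≤ ·) atTop g := hgtendsto.isBoundedUnder_le
  calc limsup (fun k => ‖H_ k - X‖ ^ ((1 : ℝ) / 2 ^ k)) atTop
      ≤ limsup g atTop := limsup_le_limsup (Eventually.of_forall hfg) hcob hbdd
    _ = r0 ^ 2 := hgtendsto.limsup_eq
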